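/- Let m(x) = φ(x)/Φ(x) be the inverse Mill's ratio, where Φ and φ are the standard normal cumulative distribution function and density. Then m is differentiable with m'(x) = −m(x)(x + m(x)), and m'(x) > −1 for all x ∈ ℝ. -/

import Mathlib

open MeasureTheory ProbabilityTheory Filter
open scoped ENNReal

/-- The standard normal cumulative distribution function `Φ`. -/
noncomputable def Phi (x : ℝ) : ℝ := ((gaussianReal 0 1) (Set.Iic x)).toReal

/-- The standard normal probability density function `φ`. -/
noncomputable def phiPDF (x : ℝ) : ℝ := gaussianPDFReal 0 1 x

/-- The joint law of `n` independent standard normal random variables. -/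
noncomputable def stdGaussianPi (n : ℕ) : Measure (Fin n → ℝ) :=
  Measure.pi fun _ => gaussianReal 0 1

/-- The intraclass-correlation multivariate Gaussian vector `X ~ N(μ, Σ)` with
`Σ_{ij} = ρ + (1-ρ)δ_{ij}`, realized as `X_i = μ_i + √ρ Y_0 + √(1-ρ) Y_i` where
`Y_0, …, Y_k` are independent standard normals (the coordinates of `ω`). -/
noncomputable def Xvec (ρ : ℝ) {k : ℕ} (μ : Fin k → ℝ) (i : Fin k) (ω : Fin (k+1) → ℝ) : ℝ :=
  μ i + Real.sqrt ρ * ω 0 + Real.sqrt (1-ρ) * ω i.succ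

/-- The cumulative distribution function of `X* = max {X_1, …, X_k}`. -/
noncomputable def Fstar (ρ : ℝ) {k : ℕ} (μ : Fin k → ℝ) (x : ℝ) : ℝ :=
  (stdGaussianPi (k+1) {ω | (⨆ i, Xvec ρ μ i ω) ≤ x}).toReal

/-- The inverse Mill's ratio `m(x) = φ(x)/Φ(x)`. -/
noncomputable def mills (x : ℝ) : ℝ := phiPDF x / Phi x

section AuxMills
open Set Real

lemma phiPDF_eq (x : ℝ) : phiPDF x = (Real.sqrt (2*Real.pi))⁻¹ * Real.exp (-(x^2/2)) := by
  simp [phiPDF, gaussianPDFReal]; left; ring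

lemma phiPDF_pos (x : ℝ) : 0 < phiPDF x := gaussianPDFReal_pos 0 1 x one_ne_zero

lemma integrable_phiPDF : Integrable phiPDF := integrable_gaussianPDFReal 0 1

lemma continuous_phiPDF : Continuous phiPDF := by
  have : phiPDF = fun x => (Real.sqrt (2*Real.pi))⁻¹ * Real.exp (-(x^2/2)) :=
    funext phiPDF_eq
  rw [this]; fun_prop

lemma Phi_eq (x : ℝ) : Phi x = ∫ t in Set.Iic x, phiPDF t := by
  rw [Phi, gaussianReal_apply_eq_integral 0 one_ne_zero,
    ENNReal.toReal_ofReal (integral_nonneg fun t => gaussianPDFReal_nonneg 0 1 t)]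
  rfl

lemma hasDerivAt_phiPDF (x : ℝ) : HasDerivAt phiPDF (-x * phiPDF x) x := by
  have h1 : HasDerivAt (fun y : ℝ => -(y^2/2)) (-x) x := by
    have := ((hasDerivAt_pow 2 x).div_const 2).neg
    exact this.congr_deriv (by norm_num)
  have h2 := (h1.exp.const_mul ((Real.sqrt (2*Real.pi))⁻¹))
  have he : (fun y => (Real.sqrt (2*Real.pi))⁻¹ * Real.exp (-(y^2/2))) = phiPDF :=
    (funext phiPDF_eq).symm
  rw [he] at h2
  refine h2.congr_deriv ?_
  rw [phiPDF_eq]; ring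

lemma hasDerivAt_Phi (x : ℝ) : HasDerivAt Phi (phiPDF x) x := by
  have key : HasDerivAt (fun y => Phi 0 + ∫ t in (0:ℝ)..y, phiPDF t) (phiPDF x) x := by
    refine HasDerivAt.const_add _ ?_
    exact intervalIntegral.integral_hasDerivAt_right
      (integrable_phiPDF.intervalIntegrable)
      (continuous_phiPDF.stronglyMeasurableAtFilter _ _)
      continuous_phiPDF.continuousAt
  refine key.congr_of_eventuallyEq (Filter.Eventually.of_forall fun y => ?_)
  simp only
  rw [Phi_eq, Phi_eq, ← intervalIntegral.integral_Iic_sub_Iic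
    integrable_phiPDF.integrableOn integrable_phiPDF.integrableOn]
  ring

lemma Phi_pos (x : ℝ) : 0 < Phi x := by
  rw [Phi_eq]
  refine (setIntegral_pos_iff_support_of_nonneg_ae
    (Filter.Eventually.of_forall fun t => (phiPDF_pos t).le)
    integrable_phiPDF.integrableOn).mpr ?_
  have : Function.support phiPDF = Set.univ := by
    ext t; simp [(phiPDF_pos t).ne']
  rw [this, Set.univ_inter]
  simp

lemma Phi_le_phiPDF {x : ℝ} (hx : x ≤ -1) : Phi x ≤ phiPDF x := by
  have hfun : (fun t => phiPDF x * Real.exp (t - x))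
      = fun t => (phiPDF x * Real.exp (-x)) * Real.exp t :=
    funext fun t => by rw [Real.exp_sub, Real.exp_neg]; ring
  have hint : IntegrableOn (fun t => phiPDF x * Real.exp (t - x)) (Iic x) := by
    rw [hfun]; exact (integrableOn_exp_Iic x).const_mul _
  have hmono : ∀ t ∈ Iic x, phiPDF t ≤ phiPDF x * Real.exp (t - x) := by
    intro t ht
    simp only [mem_Iic] at ht
    rw [phiPDF_eq, phiPDF_eq, mul_assoc, ← Real.exp_add]
    have hc : (0:ℝ) < (Real.sqrt (2*Real.pi))⁻¹ := by
      positivity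
    refine mul_le_mul_of_nonneg_left (Real.exp_le_exp.mpr ?_) hc.le
    nlinarith [sq_nonneg (t - x)]
  have := setIntegral_mono_on integrable_phiPDF.integrableOn hint measurableSet_Iic hmono
  rw [← Phi_eq] at this
  refine this.trans ?_
  have : ∫ t in Iic x, phiPDF x * Real.exp (t - x)
      = phiPDF x * ((∫ t in Iic x, Real.exp t) * Real.exp (-x)) := by
    rw [← integral_mul_const, ← integral_const_mul]
    congr 1; ext t; rw [Real.exp_sub, Real.exp_neg]; ring
  rw [this, integral_exp_Iic, ← Real.exp_add]
  simp

-- x^n * exp(-x^2/2) → 0 at -∞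
lemma tendsto_pow_mul_exp (n : ℕ) :
    Tendsto (fun x : ℝ => x^n * Real.exp (-(x^2/2))) atBot (nhds 0) := by
  refine squeeze_zero_norm' (a := Real.exp) ?_ ?_
  · filter_upwards [eventually_le_atBot (-(2*(n:ℝ)+2))] with x hx
    have hn : (0:ℝ) ≤ n := Nat.cast_nonneg n
    have hx0 : x ≤ 0 := by linarith
    rw [norm_mul, norm_pow, Real.norm_eq_abs, Real.norm_eq_abs,
      abs_of_nonneg (Real.exp_pos _).le, abs_of_nonpos hx0]
    have h1 : (-x)^n ≤ Real.exp (-x) ^ n :=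
      pow_le_pow_left₀ (neg_nonneg.mpr hx0) (by linarith [Real.add_one_le_exp (-x)]) n
    calc (-x)^n * Real.exp (-(x^2/2)) ≤ Real.exp (-x) ^ n * Real.exp (-(x^2/2)) :=
          mul_le_mul_of_nonneg_right h1 (Real.exp_pos _).le
      _ = Real.exp ((n:ℝ) * (-x) + -(x^2/2)) := by rw [← Real.exp_nat_mul, ← Real.exp_add]
      _ ≤ Real.exp x := Real.exp_le_exp.mpr (by nlinarith)
  · exact Real.tendsto_exp_atBot

lemma tendsto_pow_mul_phiPDF (n : ℕ) :
    Tendsto (fun x : ℝ => x^n * phiPDF x) atBot (nhds 0) := by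
  have h := ((tendsto_pow_mul_exp n).const_mul ((Real.sqrt (2*Real.pi))⁻¹))
  rw [mul_zero] at h
  refine h.congr fun x => ?_
  rw [phiPDF_eq]; ring

lemma tendsto_phiPDF : Tendsto phiPDF atBot (nhds 0) := by
  have := tendsto_pow_mul_phiPDF 0
  refine this.congr fun x => by simp

lemma tendsto_pow_mul_Phi (n : ℕ) :
    Tendsto (fun x : ℝ => x^n * Phi x) atBot (nhds 0) := by
  refine squeeze_zero_norm' (a := fun x => |x^n * phiPDF x|) ?_
    ((tendsto_pow_mul_phiPDF n).abs.congr' (by rfl) |>.mono_right (by rw [abs_zero]))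
  · filter_upwards [eventually_le_atBot (-1:ℝ)] with x hx
    rw [Real.norm_eq_abs, abs_mul, abs_mul]
    exact mul_le_mul_of_nonneg_left
      (by rw [abs_of_pos (Phi_pos x), abs_of_pos (phiPDF_pos x)]; exact Phi_le_phiPDF hx)
      (abs_nonneg _)

lemma tendsto_Phi : Tendsto Phi atBot (nhds 0) := by
  have := tendsto_pow_mul_Phi 0
  refine this.congr fun x => by simp

lemma pos_of_strictMono_tendsto {f : ℝ → ℝ} (hm : StrictMono f)
    (ht : Tendsto f atBot (nhds 0)) (x : ℝ) : 0 < f x := by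
  have h2 : 0 ≤ f (x - 1) := by
    refine le_of_tendsto ht ?_
    filter_upwards [eventually_le_atBot (x-1)] with z hz
    exact hm.monotone hz
  exact lt_of_le_of_lt h2 (hm (by linarith))

lemma pos_of_hasDerivAt {f f' : ℝ → ℝ} (hd : ∀ x, HasDerivAt f (f' x) x)
    (hp : ∀ x, 0 < f' x) (ht : Tendsto f atBot (nhds 0)) (x : ℝ) : 0 < f x :=
  pos_of_strictMono_tendsto
    (strictMono_of_deriv_pos fun y => by rw [(hd y).deriv]; exact hp y) ht x

lemma p_pos (x : ℝ) : 0 < x * Phi x + phiPDF x := by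
  refine pos_of_hasDerivAt (f := fun y => y * Phi y + phiPDF y) (f' := Phi) (fun y => ?_) Phi_pos ?_ x
  · exact (((hasDerivAt_id y).mul (hasDerivAt_Phi y)).add (hasDerivAt_phiPDF y)).congr_deriv (by simp only [id_eq]; ring)
  · have := (tendsto_pow_mul_Phi 1).add tendsto_phiPDF
    rw [add_zero] at this
    exact this.congr fun y => by ring

lemma g_pos (x : ℝ) : 0 < (1 + x^2) * Phi x + x * phiPDF x := by
  refine pos_of_hasDerivAt (f := fun y => (1 + y^2) * Phi y + y * phiPDF y) (f' := fun y => 2 * (y * Phi y + phiPDF y)) (fun y => ?_) ?_ ?_ x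
  · have h1 : HasDerivAt (fun y : ℝ => 1 + y^2) (2*y) y := by
      simpa using (hasDerivAt_pow 2 y).const_add 1
    have := (h1.mul (hasDerivAt_Phi y)).add ((hasDerivAt_id y).mul (hasDerivAt_phiPDF y))
    simp only [id_eq] at this
    exact this.congr_deriv (by ring)
  · intro y; linarith [p_pos y]
  · have := (tendsto_Phi.add (tendsto_pow_mul_Phi 2)).add (tendsto_pow_mul_phiPDF 1)
    simp only [add_zero] at this
    exact this.congr fun y => by ring

lemma h_pos (x : ℝ) : 0 < (Phi x)^2 - x * phiPDF x * Phi x - (phiPDF x)^2 := by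
  refine pos_of_hasDerivAt
    (f := fun y => (Phi y)^2 - y * phiPDF y * Phi y - (phiPDF y)^2)
    (f' := fun y => phiPDF y * ((1 + y^2) * Phi y + y * phiPDF y)) (fun y => ?_) ?_ ?_ x
  · have h1 := (hasDerivAt_Phi y).pow 2
    have h2 := (((hasDerivAt_id y).mul (hasDerivAt_phiPDF y)).mul (hasDerivAt_Phi y))
    have h3 := (hasDerivAt_phiPDF y).pow 2
    have := (h1.sub h2).sub h3
    simp only [id_eq] at this
    push_cast at this
    exact this.congr_deriv (by simp only [Pi.mul_apply, id_eq]; ring)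
  · exact fun y => mul_pos (phiPDF_pos y) (g_pos y)
  · have h1 := tendsto_Phi.mul tendsto_Phi
    have h2 := (tendsto_pow_mul_phiPDF 1).mul tendsto_Phi
    have h3 := tendsto_phiPDF.mul tendsto_phiPDF
    have := (h1.sub h2).sub h3
    simp only [mul_zero, zero_mul, sub_zero, zero_sub, neg_zero] at this
    exact this.congr fun y => by ring


/-- The inverse Mill's ratio is differentiable with `m'(x) = -m(x)(x + m(x))`,
and `m'(x) > -1` for all `x`. -/
theorem stmt18 :
    ∀ x : ℝ, HasDerivAt mills (-(mills x) * (x + mills x)) x ∧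
      (-1 : ℝ) < -(mills x) * (x + mills x) := by
  intro x
  have hΦ := Phi_pos x
  have hφ := phiPDF_pos x
  constructor
  · have := (hasDerivAt_phiPDF x).div (hasDerivAt_Phi x) hΦ.ne'
    have heq : phiPDF / Phi = mills := rfl
    rw [heq] at this
    refine this.congr_deriv ?_
    rw [mills]
    field_simp
    ring
  · have h := h_pos x
    rw [mills]
    set q := phiPDF x / Phi x with hq
    have hqΦ : q * Phi x = phiPDF x := div_mul_cancel₀ _ hΦ.ne'
    have heq : (Phi x)^2 * (1 - x*q - q^2)
        = (Phi x)^2 - x * phiPDF x * Phi x - (phiPDF x)^2 := by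
      rw [← hqΦ]; ring
    have h2 : 0 < (Phi x)^2 * (1 - x*q - q^2) := by rw [heq]; exact h
    have h3 : 0 < 1 - x*q - q^2 := by
      by_contra hc
      push_neg at hc
      nlinarith [mul_pos hΦ hΦ]
    nlinarith

end AuxMills
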